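/- Let R be a commutative noetherian ring with unity that is a-adically complete with respect to an ideal a of R, and let M be an R-module that is a-adically quasi-complete and such that M/aM is a finitely generated R-module. Let K = ker θ_M, where θ_M : M → M̂^a is the a-adic completion map. Then K = aK, and consequently the a-adic completion K̂^a of K is the zero module. -/

import Mathlib

open Submodule AdicCompletion Function

section Aux

variable {R : Type*} [CommRing R] {M : Type*} [AddCommGroup M] [Module R M]

private lemma mem_ker_adic_of_iff (a : Ideal R) (x : M) :
    x ∈ LinearMap.ker (of a M) ↔ ∀ n : ℕ, x ∈ (a ^ n • ⊤ : Submodule R M) := by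
  rw [LinearMap.mem_ker]
  constructor
  · intro h n
    have h' := congrArg (fun z : AdicCompletion a M => z.val n) h
    simp only [of_apply, val_zero, Pi.zero_apply, mkQ_apply, Submodule.Quotient.mk_eq_zero] at h'
    exact h'
  · intro h
    ext n
    simp only [of_apply, val_zero, Pi.zero_apply, mkQ_apply, Submodule.Quotient.mk_eq_zero]
    exact h n

private lemma isAdicComplete_of_bij (a : Ideal R) (hR : Bijective (of a R)) :
    IsAdicComplete a R := by
  haveI h1 : IsHausdorff a R := by
    refine ⟨fun x hx => ?_⟩
    apply hR.injective
    rw [_root_.map_zero]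
    ext n
    simp only [of_apply, val_zero, Pi.zero_apply, mkQ_apply, Submodule.Quotient.mk_eq_zero]
    exact SModEq.zero.mp (hx n)
  haveI h2 : IsPrecomplete a R := by
    refine ⟨fun f hf => ?_⟩
    obtain ⟨L, hL⟩ := hR.surjective (AdicCompletion.mk a R ⟨f, fun {m n} h => hf h⟩)
    refine ⟨L, fun n => ?_⟩
    have h' := congrArg (fun z : AdicCompletion a R => z.val n) hL
    simp only [of_apply, mk_apply_coe, mkQ_apply] at h'
    exact (SModEq.def).mpr h'.symm
  exact ⟨⟩

private lemma exists_span_add_ker (a : Ideal R) (hR : Bijective (of a R)) {k : ℕ}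
    (v : Fin k → M)
    (hN : span R (Set.range v) ⊔ (a • ⊤ : Submodule R M) = ⊤) (x : M) :
    ∃ y ∈ span R (Set.range v), x - y ∈ LinearMap.ker (of a M) := by
  classical
  haveI := isAdicComplete_of_bij a hR
  set N := span R (Set.range v) with hNdef
  have hsmul : ∀ j : ℕ,
      (a ^ j • ⊤ : Submodule R M) = a ^ j • N ⊔ (a ^ (j + 1) • ⊤ : Submodule R M) := by
    intro j
    conv_lhs => rw [← hN]
    rw [smul_sup, ← Submodule.smul_assoc, Ideal.smul_eq_mul, ← pow_succ]
  have hdec : ∀ (j : ℕ) (y : M), y ∈ (a ^ j • ⊤ : Submodule R M) →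
      ∃ (c : Fin k → R) (y' : M), (∀ i, c i ∈ a ^ j) ∧
        y' ∈ (a ^ (j + 1) • ⊤ : Submodule R M) ∧ y = (∑ i, c i • v i) + y' := by
    intro j y hy
    rw [hsmul j, mem_sup] at hy
    obtain ⟨z, hz, y', hy', rfl⟩ := hy
    rw [hNdef, mem_ideal_smul_span_iff_exists_sum] at hz
    obtain ⟨c, hc, hsum⟩ := hz
    refine ⟨fun i => c i, y', fun i => hc i, hy', ?_⟩
    congr 1
    rw [← hsum, Finsupp.sum_fintype]
    intro i; simp
  choose! c y' hc hy' heq using hdec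
  set r : ℕ → M := fun j => Nat.rec x (fun j y => y' j y) j with hrdef
  have hrs : ∀ j, r (j + 1) = y' j (r j) := fun j => rfl
  have hrmem : ∀ j, r j ∈ (a ^ j • ⊤ : Submodule R M) := by
    intro j
    induction j with
    | zero => rw [pow_zero, Ideal.one_eq_top, top_smul]; exact mem_top
    | succ j ih => rw [hrs]; exact hy' j (r j) ih
  set S : ℕ → Fin k → R := fun j i => ∑ t ∈ Finset.range j, c t (r t) i with hSdef
  have hxid : ∀ j, x = (∑ i, S j i • v i) + r j := by
    intro j
    induction j with
    | zero => simp only [hSdef, Finset.range_zero, Finset.sum_empty, zero_smul,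
        Finset.sum_const_zero, zero_add]; rfl
    | succ j ih =>
      have hd := heq j (r j) (hrmem j)
      have hsplit : (∑ i, S (j + 1) i • v i)
          = (∑ i, S j i • v i) + ∑ i, c j (r j) i • v i := by
        rw [← Finset.sum_add_distrib]
        refine Finset.sum_congr rfl fun i _ => ?_
        simp [hSdef, Finset.sum_range_succ, add_smul]
      calc x = (∑ i, S j i • v i) + r j := ih
        _ = (∑ i, S j i • v i) + ((∑ i, c j (r j) i • v i) + r (j + 1)) := by
              rw [hrs j, ← hd]
        _ = (∑ i, S (j + 1) i • v i) + r (j + 1) := by rw [hsplit, add_assoc]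
  have hS : ∀ (i : Fin k) {m n : ℕ}, m ≤ n →
      S m i ≡ S n i [SMOD (a ^ m • ⊤ : Submodule R R)] := by
    intro i m n hmn
    rw [SModEq.sub_mem]
    have hval : S m i - S n i = -∑ t ∈ Finset.Ico m n, c t (r t) i := by
      rw [Finset.sum_Ico_eq_sub _ hmn]
      simp [hSdef]
    rw [hval]
    have : (∑ t ∈ Finset.Ico m n, c t (r t) i) ∈ a ^ m :=
      Ideal.sum_mem _ fun t ht =>
        Ideal.pow_le_pow_right (Finset.mem_Ico.mp ht).1 (hc t (r t) (hrmem t) i)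
    have hmem : -(∑ t ∈ Finset.Ico m n, c t (r t) i) ∈ a ^ m := neg_mem this
    simpa [Ideal.smul_eq_mul, Ideal.mul_top] using hmem
  have hLim : ∀ i : Fin k, ∃ L : R, ∀ n, S n i ≡ L [SMOD (a ^ n • ⊤ : Submodule R R)] :=
    fun i => IsPrecomplete.prec inferInstance (fun {m n} h => hS i h)
  choose L hL using hLim
  refine ⟨∑ i, L i • v i, sum_mem fun i _ => smul_mem _ _ (subset_span ⟨i, rfl⟩), ?_⟩
  rw [mem_ker_adic_of_iff]
  intro n
  have hx : x - (∑ i, L i • v i) = (∑ i, (S n i - L i) • v i) + r n := by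
    conv_lhs => rw [hxid n]
    simp only [sub_smul, Finset.sum_sub_distrib]
    abel
  rw [hx]
  refine add_mem (sum_mem fun i _ => ?_) (hrmem n)
  have hmem : S n i - L i ∈ a ^ n := by
    have h' := hL i n
    rw [SModEq.sub_mem] at h'
    simpa [Ideal.smul_eq_mul, Ideal.mul_top] using h'
  exact smul_mem_smul hmem mem_top

end Aux

/-- Suppose `R` is `a`-adically complete, `M` is `a`-adically quasi-complete and `M/aM` is a
finitely generated `R`-module. If `K` is the kernel of the completion map
`θ_M : M → M̂ᵃ`, then `K = aK` and the `a`-adic completion of `K` vanishes. -/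
theorem ker_completion_eq_smul_and_adicCompletion_subsingleton
    {R : Type*} [CommRing R] [IsNoetherianRing R] (a : Ideal R)
    (hR : Function.Bijective (AdicCompletion.of a R))
    (M : Type*) [AddCommGroup M] [Module R M]
    (hM : Function.Surjective (AdicCompletion.of a M))
    (hfin : Module.Finite R (M ⧸ (a • ⊤ : Submodule R M))) :
    a • LinearMap.ker (AdicCompletion.of a M) = LinearMap.ker (AdicCompletion.of a M) ∧
      Subsingleton (AdicCompletion a (LinearMap.ker (AdicCompletion.of a M))) := by
  classical
  haveI := isAdicComplete_of_bij a hR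
  set K := LinearMap.ker (of a M) with hKdef
  obtain ⟨k, f, hf⟩ := Module.Finite.exists_fin (R := R) (M := M ⧸ (a • ⊤ : Submodule R M))
  choose v hv using fun i => Submodule.mkQ_surjective (a • ⊤ : Submodule R M) (f i)
  have hNtop : span R (Set.range v) ⊔ (a • ⊤ : Submodule R M) = ⊤ := by
    have hmap : Submodule.map (mkQ (a • ⊤ : Submodule R M)) (span R (Set.range v)) = ⊤ := by
      rw [Submodule.map_span, ← Set.range_comp]
      have : (mkQ (a • ⊤ : Submodule R M)) ∘ v = f := funext fun i => hv i
      rw [this, hf]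
    have h' := congrArg (comap (mkQ (a • ⊤ : Submodule R M))) hmap
    rwa [comap_map_eq, ker_mkQ, comap_top] at h'
  set N := span R (Set.range v) with hNdef
  have htop : N ⊔ K = ⊤ := by
    rw [eq_top_iff]
    intro x _
    obtain ⟨y, hy, hxy⟩ := exists_span_add_ker a hR v hNtop x
    exact mem_sup.mpr ⟨y, hy, x - y, hxy, by abel⟩
  have hKle : K ≤ a • K := by
    intro x hx
    set π := mkQ (a • K) with hπdef
    set N' := Submodule.map π N with hN'def
    have hN'fg : N'.FG := (fg_span (Set.finite_range v)).map π
    haveI : Module.Finite R N' := Module.Finite.iff_fg.mpr hN'fg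
    have hxj : ∀ j : ℕ, π x ∈ (a ^ (j + 1) • N' : Submodule R (M ⧸ (a • K : Submodule R M))) := by
      intro j
      have h1 : x ∈ (a ^ (j + 1) • ⊤ : Submodule R M) := (mem_ker_adic_of_iff a x).mp hx (j + 1)
      rw [← htop, smul_sup] at h1
      obtain ⟨u, hu, w, hw, rfl⟩ := mem_sup.mp h1
      have h2 : (a ^ (j + 1) • K : Submodule R M) ≤ a • K :=
        smul_mono_left (Ideal.pow_le_self (Nat.succ_ne_zero j))
      have hw0 : π w = 0 := (Submodule.Quotient.mk_eq_zero _).mpr (h2 hw)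
      rw [map_add, hw0, add_zero, hN'def, ← map_smul'']
      exact Submodule.mem_map_of_mem hu
    have hxN' : π x ∈ N' := by
      have h0 := hxj 0
      rw [pow_one] at h0
      exact smul_le_right h0
    set x' : N' := ⟨π x, hxN'⟩ with hx'def
    have hx'mem : x' ∈ (⨅ i : ℕ, a ^ i • ⊤ : Submodule R N') := by
      rw [mem_iInf]
      intro i
      cases i with
      | zero => rw [pow_zero, Ideal.one_eq_top, top_smul]; exact mem_top
      | succ i =>
        have h3 : π x ∈ Submodule.map N'.subtype (a ^ (i + 1) • ⊤ : Submodule R N') := by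
          rw [map_smul'', map_subtype_top]
          exact hxj i
        obtain ⟨y, hy, hyx⟩ := h3
        have hyx' : y = x' := Subtype.ext hyx
        rwa [hyx'] at hy
    obtain ⟨m, g, hg⟩ := Module.Finite.exists_fin' R ↥N'
    haveI : Module.Finite R ((Fin m → R) ⧸ LinearMap.ker g) :=
      Module.Finite.of_surjective (LinearMap.ker g).mkQ (Submodule.mkQ_surjective _)
    let e : ((Fin m → R) ⧸ LinearMap.ker g) ≃ₗ[R] ↥N' := g.quotKerEquivOfSurjective hg
    have hmem2 : e.symm x' ∈
        (⨅ i : ℕ, a ^ i • ⊤ : Submodule R ((Fin m → R) ⧸ LinearMap.ker g)) := by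
      rw [mem_iInf]
      intro i
      have h6 : Submodule.map e.symm.toLinearMap (a ^ i • ⊤ : Submodule R ↥N')
          = (a ^ i • ⊤ : Submodule R ((Fin m → R) ⧸ LinearMap.ker g)) := by
        rw [map_smul'', Submodule.map_top, LinearEquiv.range]
      rw [← h6]
      exact Submodule.mem_map_of_mem ((mem_iInf _).mp hx'mem i)
    obtain ⟨r, hr'⟩ := (Ideal.mem_iInf_smul_pow_eq_bot_iff a (e.symm x')).mp hmem2
    have hr : (r : R) • x' = x' := by
      have h7 := congrArg e hr'
      simpa [map_smul] using h7
    have hjac : (r : R) ∈ Ideal.jacobson ⊥ := IsAdicComplete.le_jacobson_bot (I := a) r.2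
    have hunit : IsUnit (1 - (r : R)) := by
      have h4 := Ideal.mem_jacobson_bot.mp hjac (-1)
      have : (r : R) * (-1) + 1 = 1 - (r : R) := by ring
      rwa [this] at h4
    have hzero : (1 - (r : R)) • x' = 0 := by
      have h8 := _root_.sub_smul (1 : R) (r : R) x'
      rw [one_smul, hr, sub_self] at h8
      exact h8
    obtain ⟨u, hu⟩ := hunit
    have hx0 : x' = 0 := by
      have h5 := congrArg (fun z : N' => (u⁻¹ : Rˣ) • z) hzero
      simpa [← hu, ← Units.smul_def, inv_smul_smul] using h5
    have hπ0 : π x = 0 := congrArg Subtype.val hx0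
    rwa [hπdef, ← LinearMap.mem_ker, ker_mkQ] at hπ0
  have hKsmul : a • K = K := le_antisymm smul_le_right hKle
  have htopK : (a • ⊤ : Submodule R K) = ⊤ := by
    apply Submodule.map_injective_of_injective (injective_subtype K)
    rw [map_smul'', map_subtype_top]
    exact hKsmul
  have hpow : ∀ n : ℕ, (a ^ n • ⊤ : Submodule R K) = ⊤ := by
    intro n
    induction n with
    | zero => rw [pow_zero, Ideal.one_eq_top, top_smul]
    | succ n ih => rw [pow_succ, ← Ideal.smul_eq_mul, Submodule.smul_assoc, htopK, ih]
  haveI : ∀ n : ℕ, Subsingleton (K ⧸ (a ^ n • ⊤ : Submodule R K)) := fun n =>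
    Submodule.Quotient.subsingleton_iff.mpr (hpow n)
  exact ⟨hKsmul, ⟨fun x y => AdicCompletion.ext fun n => Subsingleton.elim _ _⟩⟩
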